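/- Let T be a topological space, X a metric space, H the space of nonempty compact subsets of X with the Hausdorff metric. If f : T → H is continuous, then the projection π₁ : Z_f → T, where Z_f = {(t, x) ∈ T × X : x ∈ f(t)}, is an open map. -/

import Mathlib

open TopologicalSpace

theorem stmt8 (T : Type*) [TopologicalSpace T] (X : Type*) [MetricSpace X]
    (f : T → NonemptyCompacts X) (hf : Continuous f) :
    IsOpenMap (fun z : {p : T × X // p.2 ∈ (f p.1 : Set X)} => z.1.1) := by
  rw [isOpenMap_iff_nhds_le]
  rintro ⟨⟨t, x⟩, hx⟩
  intro A hA
  rw [Filter.mem_map, nhds_subtype_eq_comap] at hA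
  obtain ⟨B, hB, hBA⟩ := hA
  rw [nhds_prod_eq, Filter.mem_prod_iff] at hB
  obtain ⟨V, hV, U, hU, hVU⟩ := hB
  obtain ⟨ε, hε, hball⟩ := Metric.mem_nhds_iff.mp hU
  have hcont : ∀ᶠ t' in nhds t, dist (f t') (f t) < ε :=
    Metric.tendsto_nhds.mp (hf.tendsto t) ε hε
  filter_upwards [hV, hcont] with t' ht'V ht'd
  have hne : EMetric.hausdorffEdist (f t : Set X) (f t' : Set X) ≠ ⊤ :=
    Metric.hausdorffEdist_ne_top_of_nonempty_of_bounded (f t).nonempty (f t').nonempty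
      (f t).isCompact.isBounded (f t').isCompact.isBounded
  have hd : Metric.hausdorffDist (f t : Set X) (f t' : Set X) < ε := by
    rw [Metric.hausdorffDist_comm]
    exact ht'd
  obtain ⟨x', hx', hdx⟩ := Metric.exists_dist_lt_of_hausdorffDist_lt hx hd hne
  have : (⟨(t', x'), hx'⟩ : {p : T × X // p.2 ∈ (f p.1 : Set X)}) ∈
      Subtype.val ⁻¹' B := hVU ⟨ht'V, hball (Metric.mem_ball'.mpr hdx)⟩
  exact hBA this
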